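/- In the ring of formal power series ℝ⟦X⟧, the series S = Σ_{k=0}^∞ s(k)·X^{k+1} satisfies the quadratic equation S² + (X − 1)·S + X = 0. -/

import Mathlib

/-- The large Schröder numbers: `s 0 = 1` and
`s k = s (k-1) + ∑_{i=0}^{k-1} s i * s (k-1-i)` for `k ≥ 1`. -/
def s : ℕ → ℕ
  | 0 => 1
  | k + 1 =>
      s k + ∑ i ∈ (Finset.range (k + 1)).attach, s i.1 * s (k - i.1)
decreasing_by
  all_goals first
    | omega
    | (have := Finset.mem_range.mp i.2; omega)

/-- The generating series `S = ∑_{k} s(k) X^(k+1)` in `ℝ⟦X⟧`. -/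
noncomputable def S : PowerSeries ℝ :=
  PowerSeries.mk fun n => if n = 0 then 0 else (s (n - 1) : ℝ)

lemma coeff_S (n : ℕ) :
    PowerSeries.coeff (R := ℝ) n S = if n = 0 then 0 else (s (n - 1) : ℝ) :=
  PowerSeries.coeff_mk _ _

lemma s_rec (n : ℕ) : s (n + 1) = s n + ∑ i ∈ Finset.range (n + 1), s i * s (n - i) := by
  conv_lhs => rw [s]
  congr 1
  exact Finset.sum_attach (Finset.range (n + 1)) (fun i => s i * s (n - i))

theorem stmt2 : S ^ 2 + (PowerSeries.X - 1) * S + PowerSeries.X = 0 := by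
  ext n
  rw [map_add, map_add, map_zero, sq, PowerSeries.coeff_mul, sub_mul, one_mul, map_sub,
    PowerSeries.coeff_mul,
    Finset.Nat.sum_antidiagonal_eq_sum_range_succ
      (fun i j => PowerSeries.coeff (R := ℝ) i S * PowerSeries.coeff (R := ℝ) j S),
    Finset.Nat.sum_antidiagonal_eq_sum_range_succ
      (fun i j => PowerSeries.coeff (R := ℝ) i PowerSeries.X * PowerSeries.coeff (R := ℝ) j S)]
  match n with
  | 0 => simp [coeff_S]
  | 1 => simp [coeff_S, Finset.sum_range_succ, PowerSeries.coeff_X, s]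
  | (n + 2) =>
    have h1 : ∑ k ∈ Finset.range (n + 3),
        PowerSeries.coeff (R := ℝ) k S * PowerSeries.coeff (R := ℝ) (n + 2 - k) S
        = ∑ j ∈ Finset.range (n + 1), (s j : ℝ) * s (n - j) := by
      rw [Finset.sum_range_succ, Finset.sum_range_succ']
      have e1 : PowerSeries.coeff (R := ℝ) 0 S = 0 := by simp [coeff_S]
      have e2 : PowerSeries.coeff (R := ℝ) (n + 2 - (n + 2)) S = 0 := by simp [coeff_S]
      simp only [e1, e2, mul_zero, zero_mul, add_zero, zero_add]
      apply Finset.sum_congr rfl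
      intro j hj
      have hj' := Finset.mem_range.mp hj
      rw [coeff_S, coeff_S]
      have : n + 2 - (j + 1) = (n - j) + 1 := by omega
      simp [this]
    have h2 : ∑ k ∈ Finset.range (n + 3),
        PowerSeries.coeff (R := ℝ) k PowerSeries.X * PowerSeries.coeff (R := ℝ) (n + 2 - k) S
        = (s n : ℝ) := by
      rw [Finset.sum_eq_single 1]
      · rw [PowerSeries.coeff_one_X, one_mul, coeff_S]
        simp
      · intro b hb hb1
        rw [PowerSeries.coeff_X, if_neg hb1, zero_mul]
      · intro h
        exact absurd (Finset.mem_range.mpr (by omega)) h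
    rw [h1, h2, coeff_S, PowerSeries.coeff_X]
    simp only [if_neg (by omega : ¬ n + 2 = 0), if_neg (by omega : ¬ n + 2 = 1),
      show n + 2 - 1 = n + 1 from rfl]
    rw [s_rec n]
    push_cast
    ring
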